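/- (Rigorous non-asymptotic form of the error analysis in the proof of Theorem 1.) Let 𝒫 be a linear map on 2^n × 2^n complex matrices with 𝒫(P_a) = λ_a • P_a for every string a, where λ : (Fin n → Fin 4) → ℝ. Let σ be a density matrix (positive semidefinite with trace 1), let k ≤ n, and let α : (Fin n → Fin 4) → ℝ satisfy α_a = 0 whenever |a| > k; set O = ∑_a α_a • P_a. Let λ̂ : (Fin n → Fin 4) → ℝ and reals ε̃ ≥ 0 and λmin > ε̃ be such that for all a with |a| ≤ k: |λ̂_a − λ_a| ≤ ε̃ and |λ_a| ≥ λmin. Define ⃖O = ∑_{a : |a| ≤ k} (α_a / λ̂_a) • P_a. Then |tr(𝒫(⃖O) * σ) − tr(O * σ)| ≤ (ε̃ / (λmin − ε̃)) · ∑_a |α_a|. -/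

import Mathlib

open Matrix Finset

noncomputable section

/-- The four single-qubit Pauli matrices: σ₀ = I, σ₁ = X, σ₂ = Y, σ₃ = Z. -/
def pauli : Fin 4 → Matrix (Fin 2) (Fin 2) ℂ
  | 0 => 1
  | 1 => !![0, 1; 1, 0]
  | 2 => !![0, -Complex.I; Complex.I, 0]
  | 3 => !![1, 0; 0, -1]

/-- The `n`-qubit Pauli string `P_a = σ_{a 1} ⊗ ⋯ ⊗ σ_{a n}` (n-fold Kronecker product),
a `2^n × 2^n` complex matrix indexed by `Fin n → Fin 2`. -/
def PauliString {n : ℕ} (a : Fin n → Fin 4) :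
    Matrix (Fin n → Fin 2) (Fin n → Fin 2) ℂ :=
  fun i k => ∏ j, pauli (a j) (i j) (k j)

/-- `⟨a,b⟩ ∈ {0,1}`: parity of the number of positions where `a` and `b` anticommute. -/
def ppair {n : ℕ} (a b : Fin n → Fin 4) : ℕ :=
  (Finset.univ.filter fun j => a j ≠ 0 ∧ b j ≠ 0 ∧ a j ≠ b j).card % 2

/-- The weight `|a|` of a Pauli string: the number of non-identity tensor factors. -/
def pweight {n : ℕ} (a : Fin n → Fin 4) : ℕ :=
  (Finset.univ.filter fun j => a j ≠ 0).card

open scoped ComplexOrder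

/-- Non-asymptotic error analysis in the proof of Theorem 1: dividing the Pauli
coefficients of a bounded-degree `k`-local observable by approximate channel eigenvalues
recovers the ideal expectation value up to `ε̃/(λmin − ε̃) · ‖α‖₁`. -/
lemma pauli_star (t : Fin 4) (i j : Fin 2) : star (pauli t j i) = pauli t i j := by
  fin_cases t <;> fin_cases i <;> fin_cases j <;>
    simp [pauli, Matrix.one_apply]

lemma pauli_mul_self (t : Fin 4) : pauli t * pauli t = 1 := by
  fin_cases t <;> ext i j <;> fin_cases i <;> fin_cases j <;>
    simp [pauli, Matrix.mul_apply, Fin.sum_univ_two, Matrix.one_apply, Complex.I_mul_I]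

lemma pauliString_hermitian {n : ℕ} (a : Fin n → Fin 4) : (PauliString a).IsHermitian := by
  ext i j
  simp only [conjTranspose_apply, PauliString, star_prod]
  exact Finset.prod_congr rfl fun t _ => pauli_star _ _ _

lemma pauliString_mul_self {n : ℕ} (a : Fin n → Fin 4) :
    PauliString a * PauliString a = 1 := by
  ext i j
  rw [Matrix.mul_apply]
  simp only [PauliString, ← Finset.prod_mul_distrib]
  have hps := Finset.prod_univ_sum (fun _ : Fin n => (Finset.univ : Finset (Fin 2)))
    (fun t x => pauli (a t) (i t) x * pauli (a t) x (j t))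
  rw [show (Finset.univ : Finset (Fin n → Fin 2)) = Fintype.piFinset (fun _ => Finset.univ) by
    simp, ← hps]
  have : ∀ t : Fin n, (∑ x : Fin 2, pauli (a t) (i t) x * pauli (a t) x (j t))
      = (1 : Matrix (Fin 2) (Fin 2) ℂ) (i t) (j t) := by
    intro t; rw [← pauli_mul_self (a t), Matrix.mul_apply]
  rw [Finset.prod_congr rfl fun t _ => this t]
  simp [Matrix.one_apply, Finset.prod_boole, funext_iff]

lemma trace_nonneg' {m : Type*} [Fintype m] [DecidableEq m] {A : Matrix m m ℂ}
    (hA : A.PosSemidef) : 0 ≤ A.trace := by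
  refine Finset.sum_nonneg fun i _ => ?_
  have := hA.2 (Finsupp.single i 1)
  simpa [Finsupp.sum_single_index] using this

lemma trace_mul_abs_le {m : Type*} [Fintype m] [DecidableEq m] {P σ : Matrix m m ℂ}
    (hP : P.IsHermitian) (hP2 : P * P = 1) (hσ : σ.PosSemidef) (htr : σ.trace = 1) :
    ‖(P * σ).trace‖ ≤ 1 := by
  set t := (P * σ).trace with ht
  have hplusH : (1 + P)ᴴ = 1 + P := by rw [conjTranspose_add, conjTranspose_one, hP.eq]
  have hminusH : (1 - P)ᴴ = 1 - P := by rw [conjTranspose_sub, conjTranspose_one, hP.eq]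
  have h1 : (0:ℂ) ≤ 2 + 2 * t := by
    have h := trace_nonneg' (hσ.mul_mul_conjTranspose_same (1 + P))
    rw [hplusH, trace_mul_cycle,
      show (1 + P) * (1 + P) * σ = σ + P * σ + (P * σ + P * P * σ) from by noncomm_ring,
      hP2, one_mul, trace_add, trace_add, trace_add, htr] at h
    convert h using 1; ring
  have h2 : (0:ℂ) ≤ 2 - 2 * t := by
    have h := trace_nonneg' (hσ.mul_mul_conjTranspose_same (1 - P))
    rw [hminusH, trace_mul_cycle,
      show (1 - P) * (1 - P) * σ = σ - P * σ - (P * σ - P * P * σ) from by noncomm_ring,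
      hP2, one_mul, trace_sub, trace_sub, trace_sub, htr] at h
    convert h using 1; ring
  rw [Complex.le_def] at h1 h2
  have him : t.im = 0 := by have := h1.2; simp at this; linarith
  have hre1 : -1 ≤ t.re := by have := h1.1; simp at this; linarith
  have hre2 : t.re ≤ 1 := by have := h2.1; simp at this; linarith
  have : t = (t.re : ℂ) := Complex.ext (by simp) (by simp [him])
  rw [this, Complex.norm_real, Real.norm_eq_abs, abs_le]; exact ⟨hre1, hre2⟩

theorem information_recovery_error_bound {n k : ℕ} (hk : k ≤ n)
    (Pch : Matrix (Fin n → Fin 2) (Fin n → Fin 2) ℂ →ₗ[ℂ]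
          Matrix (Fin n → Fin 2) (Fin n → Fin 2) ℂ)
    (lam : (Fin n → Fin 4) → ℝ)
    (hP : ∀ a, Pch (PauliString a) = lam a • PauliString a)
    (σ : Matrix (Fin n → Fin 2) (Fin n → Fin 2) ℂ)
    (hσ : σ.PosSemidef) (htr : σ.trace = 1)
    (α : (Fin n → Fin 4) → ℝ) (hα : ∀ a, k < pweight a → α a = 0)
    (lamhat : (Fin n → Fin 4) → ℝ) (ε lammin : ℝ)
    (hε : 0 ≤ ε) (hmin : ε < lammin)
    (hclose : ∀ a, pweight a ≤ k → |lamhat a - lam a| ≤ ε)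
    (hlb : ∀ a, pweight a ≤ k → lammin ≤ |lam a|) :
    ‖((Pch (∑ a ∈ Finset.univ.filter fun a => pweight a ≤ k,
            (α a / lamhat a) • PauliString a) * σ).trace
          - ((∑ a, α a • PauliString a) * σ).trace)‖
      ≤ ε / (lammin - ε) * ∑ a, |α a| := by
  set S := Finset.univ.filter fun a : Fin n → Fin 4 => pweight a ≤ k with hS
  set e := ε / (lammin - ε) with he
  have hsub : 0 < lammin - ε := by linarith
  have he0 : 0 ≤ e := div_nonneg hε hsub.le
  -- coefficient bound
  have hcoef : ∀ a ∈ S, |α a / lamhat a * lam a - α a| ≤ e * |α a| := by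
    intro a ha
    have hak : pweight a ≤ k := by simpa [hS] using ha
    have hl := hlb a hak
    have hc := hclose a hak
    have hd : lammin - ε ≤ |lamhat a| := by
      have h1 : |lam a| ≤ |lamhat a| + |lamhat a - lam a| := by
        have := abs_sub_abs_le_abs_sub (lam a) (lamhat a)
        rw [abs_sub_comm] at this; linarith
      linarith
    have hne : lamhat a ≠ 0 := by
      intro h0; rw [h0] at hd; simp at hd; linarith
    have heq : α a / lamhat a * lam a - α a = α a * (lam a - lamhat a) / lamhat a := by
      field_simp
    rw [heq, abs_div, abs_mul]
    have h2 : |lam a - lamhat a| ≤ ε := by rw [abs_sub_comm]; exact hc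
    calc |α a| * |lam a - lamhat a| / |lamhat a| ≤ |α a| * ε / (lammin - ε) :=
          div_le_div₀ (by positivity) (mul_le_mul_of_nonneg_left h2 (abs_nonneg _)) hsub hd
      _ = e * |α a| := by rw [he]; ring
  -- trace bound
  have htb : ∀ a : Fin n → Fin 4, ‖(PauliString a * σ).trace‖ ≤ 1 := fun a =>
    trace_mul_abs_le (pauliString_hermitian a) (pauliString_mul_self a) hσ htr
  -- rewrite Pch applied to sum
  have hPch : Pch (∑ a ∈ S, (α a / lamhat a) • PauliString a)
      = ∑ a ∈ S, (α a / lamhat a * lam a) • PauliString a := by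
    rw [map_sum]
    refine Finset.sum_congr rfl fun a _ => ?_
    rw [LinearMap.map_smul_of_tower, hP, smul_smul]
  have hO : (∑ a, α a • PauliString a) = ∑ a ∈ S, α a • PauliString a := by
    refine (Finset.sum_filter_of_ne fun a _ hne => ?_).symm
    by_contra h
    push_neg at h
    exact hne (by rw [hα a h, zero_smul])
  rw [hPch, hO]
  have hdiff :
      ((∑ a ∈ S, (α a / lamhat a * lam a) • PauliString a) * σ).trace
        - ((∑ a ∈ S, α a • PauliString a) * σ).trace
      = ∑ a ∈ S, ((α a / lamhat a * lam a - α a : ℝ) : ℂ) * (PauliString a * σ).trace := by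
    rw [Finset.sum_mul, Finset.sum_mul, trace_sum, trace_sum, ← Finset.sum_sub_distrib]
    refine Finset.sum_congr rfl fun a _ => ?_
    rw [smul_mul_assoc, smul_mul_assoc, trace_smul, trace_smul]
    rw [Complex.real_smul, Complex.real_smul]
    push_cast
    ring
  rw [hdiff]
  calc ‖∑ a ∈ S, ((α a / lamhat a * lam a - α a : ℝ) : ℂ) * (PauliString a * σ).trace‖
      ≤ ∑ a ∈ S, ‖((α a / lamhat a * lam a - α a : ℝ) : ℂ) * (PauliString a * σ).trace‖ :=
        norm_sum_le _ _
    _ ≤ ∑ a ∈ S, e * |α a| := by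
        refine Finset.sum_le_sum fun a ha => ?_
        rw [norm_mul, Complex.norm_real, Real.norm_eq_abs]
        calc |α a / lamhat a * lam a - α a| * ‖(PauliString a * σ).trace‖
            ≤ |α a / lamhat a * lam a - α a| * 1 :=
              mul_le_mul_of_nonneg_left (htb a) (abs_nonneg _)
          _ = |α a / lamhat a * lam a - α a| := mul_one _
          _ ≤ e * |α a| := hcoef a ha
    _ = e * ∑ a ∈ S, |α a| := by rw [Finset.mul_sum]
    _ ≤ e * ∑ a, |α a| := by
        refine mul_le_mul_of_nonneg_left ?_ he0
        exact Finset.sum_le_sum_of_subset_of_nonneg (Finset.filter_subset _ _)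
          fun a _ _ => abs_nonneg _
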